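/- Every idempotent in the Temperley-Lieb diagram category D splits: if i : n → n satisfies i ∘ i = i, then there exist morphisms e : n → k and m : k → n with i = m ∘ e and e ∘ m = id_k. -/

import Mathlib

open Sum Relation

/-- A fixed-point free involution. -/
def FPF {X : Type*} (f : X → X) : Prop :=
  Function.Involutive f ∧ ∀ x, f x ≠ x

/-- Condition (PL1) for `f` with respect to the order on `X`:
if `i < j < f i` then `i < f j < f i`. -/
def PL1 {X : Type*} [Preorder X] (f : X → X) : Prop :=
  ∀ i j, i < j → j < f i → i < f j ∧ f j < f i

/-- Incomparability `x # y`. -/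
def Incomp {X : Type*} [Preorder X] (x y : X) : Prop :=
  ¬ (x ≤ y) ∧ ¬ (y ≤ x)

/-- Condition (PL2): if `f i # i`, `i < j` and `j # f j` then `f i < f j`. -/
def PL2 {X : Type*} [Preorder X] (f : X → X) : Prop :=
  ∀ i j, Incomp (f i) i → i < j → Incomp j (f j) → f i < f j

/-- A planar involution on `[n] ⊕ [m]` (with the disjoint-sum partial order):
a fixed-point free involution satisfying (PL1) and (PL2).  These are the
elements of `P(n, m)`. -/
def Planar {n m : ℕ} (f : Fin n ⊕ Fin m → Fin n ⊕ Fin m) : Prop :=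
  FPF f ∧ PL1 f ∧ PL2 f

/-- The graph relation of a function. -/
def graphRel {X : Type*} (f : X → X) : X → X → Prop := fun x y => f x = y

/-- The execution formula: the Geometry-of-Interaction composite of a relation
`R` on `A ⊕ B` and a relation `S` on `B ⊕ C`, defined componentwise by
`θ_{A,A} = R_{A,A} ∪ R_{A,B};S_{B,B};(R_{B,B};S_{B,B})*;R_{B,A}`,
`θ_{A,C} = R_{A,B};(S_{B,B};R_{B,B})*;S_{B,C}`,
`θ_{C,A} = S_{C,B};(R_{B,B};S_{B,B})*;R_{B,A}`,
`θ_{C,C} = S_{C,C} ∪ S_{C,B};R_{B,B};(S_{B,B};R_{B,B})*;S_{B,C}`. -/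
def ExecR {A B C : Type*} (R : A ⊕ B → A ⊕ B → Prop) (S : B ⊕ C → B ⊕ C → Prop) :
    A ⊕ C → A ⊕ C → Prop :=
  let Raa : A → A → Prop := fun i j => R (Sum.inl i) (Sum.inl j)
  let Rab : A → B → Prop := fun i j => R (Sum.inl i) (Sum.inr j)
  let Rba : B → A → Prop := fun i j => R (Sum.inr i) (Sum.inl j)
  let Rbb : B → B → Prop := fun i j => R (Sum.inr i) (Sum.inr j)
  let Sbb : B → B → Prop := fun i j => S (Sum.inl i) (Sum.inl j)
  let Sbc : B → C → Prop := fun i j => S (Sum.inl i) (Sum.inr j)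
  let Scb : C → B → Prop := fun i j => S (Sum.inr i) (Sum.inl j)
  let Scc : C → C → Prop := fun i j => S (Sum.inr i) (Sum.inr j)
  fun x y =>
    match x, y with
    | Sum.inl i, Sum.inl j =>
        Raa i j ∨
          Relation.Comp Rab
            (Relation.Comp Sbb
              (Relation.Comp (Relation.ReflTransGen (Relation.Comp Rbb Sbb)) Rba)) i j
    | Sum.inl i, Sum.inr j =>
        Relation.Comp Rab
          (Relation.Comp (Relation.ReflTransGen (Relation.Comp Sbb Rbb)) Sbc) i j
    | Sum.inr i, Sum.inl j =>
        Relation.Comp Scb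
          (Relation.Comp (Relation.ReflTransGen (Relation.Comp Rbb Sbb)) Rba) i j
    | Sum.inr i, Sum.inr j =>
        Scc i j ∨
          Relation.Comp Scb
            (Relation.Comp Rbb
              (Relation.Comp (Relation.ReflTransGen (Relation.Comp Sbb Rbb)) Sbc)) i j

/-- The execution-formula composite of two involutions, as a function: for
planar involutions the execution relation is the graph of a function, and
`execFun f g` is that function. -/
noncomputable def execFun {n m p : ℕ} (f : Fin n ⊕ Fin m → Fin n ⊕ Fin m)
    (g : Fin m ⊕ Fin p → Fin m ⊕ Fin p) : Fin n ⊕ Fin p → Fin n ⊕ Fin p :=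
  fun x =>
    @dite _ (∃ y, ExecR (graphRel f) (graphRel g) x y) (Classical.propDecidable _)
      (fun h => h.choose) (fun _ => x)

/-- The partial bijection `Cyc(f,g) = f_{m,m} ; g_{m,m}` on `[m]`:
relational composition of the caps of `f` with the cups of `g`. -/
def Cyc {n m p : ℕ} (f : Fin n ⊕ Fin m → Fin n ⊕ Fin m)
    (g : Fin m ⊕ Fin p → Fin m ⊕ Fin p) : Fin m → Fin m → Prop :=
  Relation.Comp (fun i j => f (Sum.inr i) = Sum.inr j)
    (fun i j => g (Sum.inl i) = Sum.inl j)

/-- Iterated relational composition `r^k` (with `r^0` the identity). -/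
def relPow {α : Type*} (r : α → α → Prop) : ℕ → α → α → Prop
  | 0 => Eq
  | k + 1 => Relation.Comp r (relPow r k)

/-- `i` is a cyclic element of `r`: `r^k i i` for some `k > 0`. -/
def Cyclic {α : Type*} (r : α → α → Prop) (i : α) : Prop :=
  ∃ k, 0 < k ∧ relPow r k i i

/-- The cycle (orbit) of `i` under `r`. -/
def cycleOf {α : Type*} (r : α → α → Prop) (i : α) : Set α :=
  {j | ∃ k, relPow r k i j}

/-- `Z(f,g)`: the number of distinct cycles of `Cyc(f,g)`. -/
noncomputable def Z {n m p : ℕ} (f : Fin n ⊕ Fin m → Fin n ⊕ Fin m)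
    (g : Fin m ⊕ Fin p → Fin m ⊕ Fin p) : ℕ :=
  {S : Set (Fin m) | ∃ i, Cyclic (Cyc f g) i ∧ S = cycleOf (Cyc f g) i}.ncard

/-- A morphism `n → m` of the Temperley-Lieb category: a loop count together
with a function on `[n] ⊕ [m]` (required to be a planar involution for
genuine morphisms). -/
def TLHom (n m : ℕ) : Type :=
  ℕ × (Fin n ⊕ Fin m → Fin n ⊕ Fin m)

/-- Composition in the Temperley-Lieb category:
`(t, g) ∘ (s, f) = (s + t + Z(f,g), f;g)`. -/
noncomputable def TLcomp {n m p : ℕ} (F : TLHom n m) (G : TLHom m p) : TLHom n p :=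
  (F.1 + G.1 + Z F.2 G.2, execFun F.2 G.2)

/-- The identity morphism: zero loops and the twist involution `i ↔ i'`. -/
def tlid (n : ℕ) : TLHom n n :=
  (0, Sum.swap)

/-- `f` has a cup: two top-row elements are paired with each other. -/
def HasCup {n m : ℕ} (f : Fin n ⊕ Fin m → Fin n ⊕ Fin m) : Prop :=
  ∃ i j : Fin n, f (Sum.inl i) = Sum.inl j

/-- `f` has a cap: two bottom-row elements are paired with each other. -/
def HasCap {n m : ℕ} (f : Fin n ⊕ Fin m → Fin n ⊕ Fin m) : Prop :=
  ∃ i j : Fin m, f (Sum.inr i) = Sum.inr j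

/-- `F : n → m` is monic in the diagram category `D`: left-cancellable with
respect to all morphisms of `D` (pairs of a loop count and a planar
involution). -/
def Monic {n m : ℕ} (F : TLHom n m) : Prop :=
  ∀ (p : ℕ) (G H : TLHom p n), Planar G.2 → Planar H.2 →
    TLcomp G F = TLcomp H F → G = H

/-- `F : n → m` is epic in the diagram category `D`: right-cancellable with
respect to all morphisms of `D`. -/
def Epic {n m : ℕ} (F : TLHom n m) : Prop :=
  ∀ (p : ℕ) (G H : TLHom m p), Planar G.2 → Planar H.2 →
    TLcomp F G = TLcomp F H → G = H

/-! ### Auxiliary development for idempotent splitting -/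

section RelAux

variable {α : Type*} {r : α → α → Prop}

private lemma rtg_eq_of_empty (h : ∀ a b, ¬ r a b) {a b : α}
    (hab : Relation.ReflTransGen r a b) : a = b := by
  induction hab with
  | refl => rfl
  | tail _ hstep _ => exact absurd hstep (h _ _)

private lemma rtg_total_of_det (hdet : ∀ a b c, r a b → r a c → b = c) {a b c : α}
    (hab : Relation.ReflTransGen r a b) (hac : Relation.ReflTransGen r a c) :
    Relation.ReflTransGen r b c ∨ Relation.ReflTransGen r c b := by
  induction hab with
  | refl => exact Or.inl hac
  | tail _ hstep ih =>
      rcases ih with h | h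
      · rcases h.cases_head with rfl | ⟨d, hd, hdc⟩
        · exact Or.inr (Relation.ReflTransGen.single hstep)
        · rw [hdet _ _ _ hstep hd]; exact Or.inl hdc
      · exact Or.inr (h.tail hstep)

private lemma rtg_eq_of_terminal (hdet : ∀ a b c, r a b → r a c → b = c) {a b c : α}
    (hab : Relation.ReflTransGen r a b) (hac : Relation.ReflTransGen r a c)
    (tb : ∀ d, ¬ r b d) (tc : ∀ d, ¬ r c d) : b = c := by
  rcases rtg_total_of_det hdet hab hac with h | h
  · rcases h.cases_head with h' | ⟨d, hd, _⟩
    · exact h'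
    · exact absurd hd (tb d)
  · rcases h.cases_head with h' | ⟨d, hd, _⟩
    · exact h'.symm
    · exact absurd hd (tc d)

end RelAux

section StepAux

variable {n : ℕ}

/-- top-top pairs of `f`. -/
private def cupr (f : Fin n ⊕ Fin n → Fin n ⊕ Fin n) : Fin n → Fin n → Prop :=
  fun a c => f (Sum.inl a) = Sum.inl c

/-- bottom-bottom pairs of `f`. -/
private def capr (f : Fin n ⊕ Fin n → Fin n ⊕ Fin n) : Fin n → Fin n → Prop :=
  fun a c => f (Sum.inr a) = Sum.inr c

private def stepr (f : Fin n ⊕ Fin n → Fin n ⊕ Fin n) : Fin n → Fin n → Prop :=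
  Relation.Comp (cupr f) (capr f)

private def stepr2 (f : Fin n ⊕ Fin n → Fin n ⊕ Fin n) : Fin n → Fin n → Prop :=
  Relation.Comp (capr f) (cupr f)

variable {f : Fin n ⊕ Fin n → Fin n ⊕ Fin n}

private lemma cupr_symm (hinv : Function.Involutive f) {a c} (h : cupr f a c) :
    cupr f c a := by
  have := hinv (Sum.inl a); rw [h] at this; exact this

private lemma capr_symm (hinv : Function.Involutive f) {a c} (h : capr f a c) :
    capr f c a := by
  have := hinv (Sum.inr a); rw [h] at this; exact this

private lemma cupr_det {a c c'} (h : cupr f a c) (h' : cupr f a c') : c = c' := by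
  have h1 : f (Sum.inl a) = Sum.inl c := h
  have h2 : f (Sum.inl a) = Sum.inl c' := h'
  rw [h1] at h2; exact Sum.inl.inj h2

private lemma capr_det {a c c'} (h : capr f a c) (h' : capr f a c') : c = c' := by
  have h1 : f (Sum.inr a) = Sum.inr c := h
  have h2 : f (Sum.inr a) = Sum.inr c' := h'
  rw [h1] at h2; exact Sum.inr.inj h2

private lemma stepr_det : ∀ a b c, stepr f a b → stepr f a c → b = c := by
  rintro a b c ⟨u, hu, hub⟩ ⟨v, hv, hvc⟩
  rw [← cupr_det hu hv] at hvc; exact capr_det hub hvc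

private lemma stepr2_det : ∀ a b c, stepr2 f a b → stepr2 f a c → b = c := by
  rintro a b c ⟨u, hu, hub⟩ ⟨v, hv, hvc⟩
  rw [← capr_det hu hv] at hvc; exact cupr_det hub hvc

private lemma stepr_terminal {x y} (hx : f (Sum.inl x) = Sum.inr y) :
    ∀ d, ¬ stepr f x d := by
  rintro d ⟨u, hu, -⟩
  have hu' : f (Sum.inl x) = Sum.inl u := hu
  rw [hx] at hu'; exact nomatch hu'

private lemma stepr2_terminal {x y} (hx : f (Sum.inr x) = Sum.inl y) :
    ∀ d, ¬ stepr2 f x d := by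
  rintro d ⟨u, hu, -⟩
  have hu' : f (Sum.inr x) = Sum.inr u := hu
  rw [hx] at hu'; exact nomatch hu'

private lemma rtg_stepr_rev (hinv : Function.Involutive f) {a b}
    (h : Relation.ReflTransGen (stepr f) a b) :
    Relation.ReflTransGen (stepr2 f) b a := by
  have h' : Relation.ReflTransGen (Function.swap (stepr2 f)) a b := by
    refine Relation.ReflTransGen.mono ?_ _ _ h
    rintro u v ⟨c, hc, hcv⟩
    exact ⟨c, capr_symm hinv hcv, cupr_symm hinv hc⟩
  exact Relation.reflTransGen_swap.mp h'

/-- Exclusion lemma: if from `a` a cup∘cap-chain reaches a through-top `x`, then no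
path starting with a cup at `a` and alternating cap/cup can reach a through-bottom. -/
private lemma excl1 (hinv : Function.Involutive f) :
    ∀ a x, Relation.ReflTransGen (stepr f) a x → (∃ y, f (Sum.inl x) = Sum.inr y) →
    ∀ c, cupr f a c → ∀ d, Relation.ReflTransGen (stepr2 f) c d →
    (∃ y, f (Sum.inr d) = Sum.inl y) → False := by
  intro a x hax hx
  induction hax using Relation.ReflTransGen.head_induction_on with
  | refl =>
      rintro c hc d - -
      obtain ⟨y, hy⟩ := hx
      have hc2 : f (Sum.inl x) = Sum.inl c := hc
      rw [hy] at hc2; exact nomatch hc2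
  | head hstep _ ih =>
      rintro c hc d hcd hd
      obtain ⟨c', hc', hcap⟩ := hstep
      have hcc : c = c' := cupr_det hc hc'
      subst hcc
      rcases hcd.cases_head with rfl | ⟨mid, ⟨w, hw, hwmid⟩, hmidd⟩
      · obtain ⟨y, hy⟩ := hd
        have h1 : f (Sum.inr c) = Sum.inr _ := hcap
        rw [h1] at hy; exact nomatch hy
      · have hw' := capr_det hcap hw
        subst hw'
        exact ih _ hwmid _ hmidd hd

/-- Mirror exclusion lemma. -/
private lemma excl2 (hinv : Function.Involutive f) :
    ∀ a x, Relation.ReflTransGen (stepr2 f) a x → (∃ y, f (Sum.inr x) = Sum.inl y) →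
    ∀ c, capr f a c → ∀ d, Relation.ReflTransGen (stepr f) c d →
    (∃ y, f (Sum.inl d) = Sum.inr y) → False := by
  intro a x hax hx
  induction hax using Relation.ReflTransGen.head_induction_on with
  | refl =>
      rintro c hc d - -
      obtain ⟨y, hy⟩ := hx
      have hc2 : f (Sum.inr x) = Sum.inr c := hc
      rw [hy] at hc2; exact nomatch hc2
  | head hstep _ ih =>
      rintro c hc d hcd hd
      obtain ⟨c', hc', hcup⟩ := hstep
      have hcc : c = c' := capr_det hc hc'
      subst hcc
      rcases hcd.cases_head with rfl | ⟨mid, ⟨w, hw, hwmid⟩, hmidd⟩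
      · obtain ⟨y, hy⟩ := hd
        have h1 : f (Sum.inl c) = Sum.inl _ := hcup
        rw [h1] at hy; exact nomatch hy
      · have hw' := cupr_det hcup hw
        subst hw'
        exact ih _ hwmid _ hmidd hd

end StepAux
section EM

variable {n k : ℕ}

private noncomputable def eF (f : Fin n ⊕ Fin n → Fin n ⊕ Fin n) (τ : Fin k → Fin n) :
    Fin n ⊕ Fin k → Fin n ⊕ Fin k
  | Sum.inl x =>
      if h : ∃ i, τ i = x then Sum.inr h.choose
      else Sum.inl ((f (Sum.inl x)).getLeft?.getD x)
  | Sum.inr i => Sum.inl (τ i)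

private noncomputable def mF (f : Fin n ⊕ Fin n → Fin n ⊕ Fin n) (β : Fin k → Fin n) :
    Fin k ⊕ Fin n → Fin k ⊕ Fin n
  | Sum.inl i => Sum.inr (β i)
  | Sum.inr x =>
      if h : ∃ i, β i = x then Sum.inl h.choose
      else Sum.inr ((f (Sum.inr x)).getRight?.getD x)

variable {f : Fin n ⊕ Fin n → Fin n ⊕ Fin n} {τ β : Fin k → Fin n}

private lemma eF_inr (i : Fin k) : eF f τ (Sum.inr i) = Sum.inl (τ i) := rfl

private lemma mF_inl (i : Fin k) : mF f β (Sum.inl i) = Sum.inr (β i) := rfl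

private lemma eF_thru (hτ : Function.Injective τ) (i : Fin k) :
    eF f τ (Sum.inl (τ i)) = Sum.inr i := by
  have h : ∃ j, τ j = τ i := ⟨i, rfl⟩
  show (if h : ∃ j, τ j = τ i then Sum.inr h.choose else _) = _
  rw [dif_pos h]
  exact congrArg Sum.inr (hτ h.choose_spec)

private lemma mF_thru (hβ : Function.Injective β) (i : Fin k) :
    mF f β (Sum.inr (β i)) = Sum.inl i := by
  have h : ∃ j, β j = β i := ⟨i, rfl⟩
  show (if h : ∃ j, β j = β i then Sum.inl h.choose else _) = _
  rw [dif_pos h]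
  exact congrArg Sum.inl (hβ h.choose_spec)

private lemma eF_cup (hx : ¬ ∃ i, τ i = x) {y : Fin n} (hy : f (Sum.inl x) = Sum.inl y) :
    eF f τ (Sum.inl x) = Sum.inl y := by
  show (if h : ∃ j, τ j = x then Sum.inr h.choose else
      Sum.inl ((f (Sum.inl x)).getLeft?.getD x)) = _
  rw [dif_neg hx, hy]
  rfl

private lemma mF_cap (hx : ¬ ∃ i, β i = x) {y : Fin n} (hy : f (Sum.inr x) = Sum.inr y) :
    mF f β (Sum.inr x) = Sum.inr y := by
  show (if h : ∃ j, β j = x then Sum.inl h.choose else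
      Sum.inr ((f (Sum.inr x)).getRight?.getD x)) = _
  rw [dif_neg hx, hy]
  rfl

end EM
section Main

variable {n k : ℕ}

/-- All the data/hypotheses needed to split the idempotent `f`. -/
private structure Good (f : Fin n ⊕ Fin n → Fin n ⊕ Fin n) (τ β : Fin k → Fin n) : Prop where
  hinv : Function.Involutive f
  hfpf : ∀ x, f x ≠ x
  hPL1' : PL1 f
  hτs : StrictMono τ
  hβs : StrictMono β
  hτβ : ∀ i, f (Sum.inl (τ i)) = Sum.inr (β i)
  htop : ∀ x, (∃ i, τ i = x) ∨ ∃ y, f (Sum.inl x) = Sum.inl y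
  hbot : ∀ x, (∃ i, β i = x) ∨ ∃ y, f (Sum.inr x) = Sum.inr y
  hA : ∀ i, Relation.ReflTransGen (stepr f) (β i) (τ i)

variable {f : Fin n ⊕ Fin n → Fin n ⊕ Fin n} {τ β : Fin k → Fin n}

private lemma Good.hτinj (hg : Good f τ β) : Function.Injective τ := hg.hτs.injective

private lemma Good.hβinj (hg : Good f τ β) : Function.Injective β := hg.hβs.injective

private lemma Good.hβτ (hg : Good f τ β) (i : Fin k) : f (Sum.inr (β i)) = Sum.inl (τ i) := by
  have := hg.hinv (Sum.inl (τ i)); rw [hg.hτβ i] at this; exact this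

private lemma Good.not_thru (hg : Good f τ β) {x y : Fin n} (hy : f (Sum.inl x) = Sum.inl y) :
    ¬ ∃ i, τ i = x := by
  rintro ⟨i, rfl⟩; rw [hg.hτβ i] at hy; exact nomatch hy

private lemma Good.not_bthru (hg : Good f τ β) {x y : Fin n} (hy : f (Sum.inr x) = Sum.inr y) :
    ¬ ∃ i, β i = x := by
  rintro ⟨i, rfl⟩; rw [hg.hβτ i] at hy; exact nomatch hy

private lemma Good.eF_inl_iff (hg : Good f τ β) {x y : Fin n} :
    eF f τ (Sum.inl x) = Sum.inl y ↔ f (Sum.inl x) = Sum.inl y := by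
  constructor
  · intro h
    rcases hg.htop x with ⟨i, rfl⟩ | ⟨y', hy'⟩
    · rw [eF_thru hg.hτinj] at h; exact nomatch h
    · rw [eF_cup (hg.not_thru hy') hy'] at h
      rw [hy', Sum.inl.inj h]
  · intro h; exact eF_cup (hg.not_thru h) h

private lemma Good.eF_inl_inr_iff (hg : Good f τ β) {x : Fin n} {i : Fin k} :
    eF f τ (Sum.inl x) = Sum.inr i ↔ x = τ i := by
  constructor
  · intro h
    rcases hg.htop x with ⟨j, rfl⟩ | ⟨y', hy'⟩
    · rw [eF_thru hg.hτinj] at h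
      rw [Sum.inr.inj h]
    · rw [eF_cup (hg.not_thru hy') hy'] at h; exact nomatch h
  · rintro rfl; exact eF_thru hg.hτinj i

private lemma Good.mF_inr_iff (hg : Good f τ β) {x y : Fin n} :
    mF f β (Sum.inr x) = Sum.inr y ↔ f (Sum.inr x) = Sum.inr y := by
  constructor
  · intro h
    rcases hg.hbot x with ⟨i, rfl⟩ | ⟨y', hy'⟩
    · rw [mF_thru hg.hβinj] at h; exact nomatch h
    · rw [mF_cap (hg.not_bthru hy') hy'] at h
      rw [hy', Sum.inr.inj h]
  · intro h; exact mF_cap (hg.not_bthru h) h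

private lemma Good.mF_inr_inl_iff (hg : Good f τ β) {x : Fin n} {i : Fin k} :
    mF f β (Sum.inr x) = Sum.inl i ↔ x = β i := by
  constructor
  · intro h
    rcases hg.hbot x with ⟨j, rfl⟩ | ⟨y', hy'⟩
    · rw [mF_thru hg.hβinj] at h
      rw [Sum.inl.inj h]
    · rw [mF_cap (hg.not_bthru hy') hy'] at h; exact nomatch h
  · rintro rfl; exact mF_thru hg.hβinj i

end Main
section Planarity

private lemma incomp_inr_inl {α β : Type*} [Preorder α] [Preorder β] (a : α) (b : β) :
    Incomp (Sum.inr b : α ⊕ β) (Sum.inl a) := ⟨Sum.not_inr_le_inl, Sum.not_inl_le_inr⟩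

private lemma incomp_inl_inr {α β : Type*} [Preorder α] [Preorder β] (a : α) (b : β) :
    Incomp (Sum.inl a : α ⊕ β) (Sum.inr b) := ⟨Sum.not_inl_le_inr, Sum.not_inr_le_inl⟩

private lemma not_incomp_inl_inl {α β : Type*} [LinearOrder α] [Preorder β] (a a' : α) :
    ¬ Incomp (Sum.inl a : α ⊕ β) (Sum.inl a') := by
  rintro ⟨h1, h2⟩
  rcases le_total a a' with h | h
  · exact h1 (Sum.inl_le_inl_iff.mpr h)
  · exact h2 (Sum.inl_le_inl_iff.mpr h)

private lemma not_incomp_inr_inr {α β : Type*} [Preorder α] [LinearOrder β] (b b' : β) :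
    ¬ Incomp (Sum.inr b : α ⊕ β) (Sum.inr b') := by
  rintro ⟨h1, h2⟩
  rcases le_total b b' with h | h
  · exact h1 (Sum.inr_le_inr_iff.mpr h)
  · exact h2 (Sum.inr_le_inr_iff.mpr h)


variable {n k : ℕ} {f : Fin n ⊕ Fin n → Fin n ⊕ Fin n} {τ β : Fin k → Fin n}

private lemma Good.e_planar (hg : Good f τ β) : Planar (eF f τ) := by
  refine ⟨⟨?_, ?_⟩, ?_, ?_⟩
  · -- involutive
    intro z
    match z with
    | Sum.inr i => rw [eF_inr, eF_thru hg.hτinj]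
    | Sum.inl x =>
        rcases hg.htop x with ⟨i, rfl⟩ | ⟨y, hy⟩
        · rw [eF_thru hg.hτinj, eF_inr]
        · have hyx : f (Sum.inl y) = Sum.inl x := by
            have := hg.hinv (Sum.inl x); rw [hy] at this; exact this
          rw [eF_cup (hg.not_thru hy) hy, eF_cup (hg.not_thru hyx) hyx]
  · -- no fixed point
    intro z
    match z with
    | Sum.inr i => rw [eF_inr]; exact fun h => nomatch h
    | Sum.inl x =>
        rcases hg.htop x with ⟨i, rfl⟩ | ⟨y, hy⟩
        · rw [eF_thru hg.hτinj]; exact fun h => nomatch h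
        · rw [eF_cup (hg.not_thru hy) hy]
          intro h
          rw [Sum.inl.inj h] at hy
          exact hg.hfpf _ hy
  · -- PL1
    intro i j hij hjfi
    match i with
    | Sum.inr a =>
        rw [eF_inr] at hjfi
        match j with
        | Sum.inl u => exact absurd hij Sum.not_inr_lt_inl
        | Sum.inr u => exact absurd hjfi Sum.not_inr_lt_inl
    | Sum.inl x =>
        rcases hg.htop x with ⟨a, rfl⟩ | ⟨y, hy⟩
        · rw [eF_thru hg.hτinj] at hjfi
          match j with
          | Sum.inl u => exact absurd hjfi Sum.not_inl_lt_inr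
          | Sum.inr u => exact absurd hij Sum.not_inl_lt_inr
        · rw [eF_cup (hg.not_thru hy) hy] at hjfi ⊢
          match j with
          | Sum.inr u => exact absurd hjfi Sum.not_inr_lt_inl
          | Sum.inl u =>
              have hxu : x < u := Sum.inl_lt_inl_iff.mp hij
              have huy : u < y := Sum.inl_lt_inl_iff.mp hjfi
              have h2 := hg.hPL1' (Sum.inl x) (Sum.inl u)
                (Sum.inl_lt_inl_iff.mpr hxu) (by rw [hy]; exact Sum.inl_lt_inl_iff.mpr huy)
              rw [hy] at h2
              obtain ⟨h3, h4⟩ := h2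
              match hv : f (Sum.inl u) with
              | Sum.inr v => rw [hv] at h4; exact absurd h4 Sum.not_inr_lt_inl
              | Sum.inl v =>
                  rw [hv] at h3 h4
                  rw [eF_cup (hg.not_thru hv) hv]
                  exact ⟨Sum.inl_lt_inl_iff.mpr (Sum.inl_lt_inl_iff.mp h3),
                    Sum.inl_lt_inl_iff.mpr (Sum.inl_lt_inl_iff.mp h4)⟩
  · -- PL2
    intro i j h1 hij h2
    match i with
    | Sum.inl x =>
        rcases hg.htop x with ⟨a, rfl⟩ | ⟨y, hy⟩
        · rw [eF_thru hg.hτinj] at h1 ⊢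
          match j with
          | Sum.inr u => exact absurd hij Sum.not_inl_lt_inr
          | Sum.inl u =>
              rcases hg.htop u with ⟨c, rfl⟩ | ⟨y', hy'⟩
              · rw [eF_thru hg.hτinj] at h2 ⊢
                have : τ a < τ c := Sum.inl_lt_inl_iff.mp hij
                exact Sum.inr_lt_inr_iff.mpr (hg.hτs.lt_iff_lt.mp this)
              · rw [eF_cup (hg.not_thru hy') hy'] at h2
                exact absurd h2 (not_incomp_inl_inl _ _)
        · rw [eF_cup (hg.not_thru hy) hy] at h1
          exact absurd h1 (not_incomp_inl_inl _ _)
    | Sum.inr a =>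
        rw [eF_inr] at h1 ⊢
        match j with
        | Sum.inl u => exact absurd hij Sum.not_inr_lt_inl
        | Sum.inr c =>
            rw [eF_inr]
            have : a < c := Sum.inr_lt_inr_iff.mp hij
            exact Sum.inl_lt_inl_iff.mpr (hg.hτs this)

private lemma Good.m_planar (hg : Good f τ β) : Planar (mF f β) := by
  refine ⟨⟨?_, ?_⟩, ?_, ?_⟩
  · -- involutive
    intro z
    match z with
    | Sum.inl i => rw [mF_inl, mF_thru hg.hβinj]
    | Sum.inr x =>
        rcases hg.hbot x with ⟨i, rfl⟩ | ⟨y, hy⟩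
        · rw [mF_thru hg.hβinj, mF_inl]
        · have hyx : f (Sum.inr y) = Sum.inr x := by
            have := hg.hinv (Sum.inr x); rw [hy] at this; exact this
          rw [mF_cap (hg.not_bthru hy) hy, mF_cap (hg.not_bthru hyx) hyx]
  · -- no fixed point
    intro z
    match z with
    | Sum.inl i => rw [mF_inl]; exact fun h => nomatch h
    | Sum.inr x =>
        rcases hg.hbot x with ⟨i, rfl⟩ | ⟨y, hy⟩
        · rw [mF_thru hg.hβinj]; exact fun h => nomatch h
        · rw [mF_cap (hg.not_bthru hy) hy]
          intro h
          rw [Sum.inr.inj h] at hy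
          exact hg.hfpf _ hy
  · -- PL1
    intro i j hij hjfi
    match i with
    | Sum.inl a =>
        rw [mF_inl] at hjfi
        match j with
        | Sum.inr u => exact absurd hij Sum.not_inl_lt_inr
        | Sum.inl u => exact absurd hjfi Sum.not_inl_lt_inr
    | Sum.inr x =>
        rcases hg.hbot x with ⟨a, rfl⟩ | ⟨y, hy⟩
        · rw [mF_thru hg.hβinj] at hjfi
          match j with
          | Sum.inr u => exact absurd hjfi Sum.not_inr_lt_inl
          | Sum.inl u => exact absurd hij Sum.not_inr_lt_inl
        · rw [mF_cap (hg.not_bthru hy) hy] at hjfi ⊢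
          match j with
          | Sum.inl u => exact absurd hjfi Sum.not_inl_lt_inr
          | Sum.inr u =>
              have hxu : x < u := Sum.inr_lt_inr_iff.mp hij
              have huy : u < y := Sum.inr_lt_inr_iff.mp hjfi
              have h2 := hg.hPL1' (Sum.inr x) (Sum.inr u)
                (Sum.inr_lt_inr_iff.mpr hxu) (by rw [hy]; exact Sum.inr_lt_inr_iff.mpr huy)
              rw [hy] at h2
              obtain ⟨h3, h4⟩ := h2
              match hv : f (Sum.inr u) with
              | Sum.inl v => rw [hv] at h4; exact absurd h4 Sum.not_inl_lt_inr
              | Sum.inr v =>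
                  rw [hv] at h3 h4
                  rw [mF_cap (hg.not_bthru hv) hv]
                  exact ⟨Sum.inr_lt_inr_iff.mpr (Sum.inr_lt_inr_iff.mp h3),
                    Sum.inr_lt_inr_iff.mpr (Sum.inr_lt_inr_iff.mp h4)⟩
  · -- PL2
    intro i j h1 hij h2
    match i with
    | Sum.inr x =>
        rcases hg.hbot x with ⟨a, rfl⟩ | ⟨y, hy⟩
        · rw [mF_thru hg.hβinj] at h1 ⊢
          match j with
          | Sum.inl u => exact absurd hij Sum.not_inr_lt_inl
          | Sum.inr u =>
              rcases hg.hbot u with ⟨c, rfl⟩ | ⟨y', hy'⟩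
              · rw [mF_thru hg.hβinj] at h2 ⊢
                have : β a < β c := Sum.inr_lt_inr_iff.mp hij
                exact Sum.inl_lt_inl_iff.mpr (hg.hβs.lt_iff_lt.mp this)
              · rw [mF_cap (hg.not_bthru hy') hy'] at h2
                exact absurd h2 (not_incomp_inr_inr _ _)
        · rw [mF_cap (hg.not_bthru hy) hy] at h1
          exact absurd h1 (not_incomp_inr_inr _ _)
    | Sum.inl a =>
        rw [mF_inl] at h1 ⊢
        match j with
        | Sum.inr u => exact absurd hij Sum.not_inl_lt_inr
        | Sum.inl c =>
            rw [mF_inl]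
            have : a < c := Sum.inl_lt_inl_iff.mp hij
            exact Sum.inr_lt_inr_iff.mpr (hg.hβs this)

end Planarity
section Exec

private lemma execFun_eq {n m p : ℕ} {u : Fin n ⊕ Fin m → Fin n ⊕ Fin m}
    {v : Fin m ⊕ Fin p → Fin m ⊕ Fin p} {w : Fin n ⊕ Fin p → Fin n ⊕ Fin p}
    (hex : ∀ x, ExecR (graphRel u) (graphRel v) x (w x))
    (huniq : ∀ x y, ExecR (graphRel u) (graphRel v) x y → y = w x) :
    execFun u v = w := by
  funext x
  unfold execFun
  rw [dif_pos ⟨w x, hex x⟩]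
  exact huniq x _ (Exists.choose_spec (⟨w x, hex x⟩ : ∃ y, ExecR (graphRel u) (graphRel v) x y))

variable {n k : ℕ} {f : Fin n ⊕ Fin n → Fin n ⊕ Fin n} {τ β : Fin k → Fin n}

private lemma Good.exec_em (hg : Good f τ β) : execFun (eF f τ) (mF f β) = f := by
  apply execFun_eq
  · intro x
    match x with
    | Sum.inl x =>
        rcases hg.htop x with ⟨i, rfl⟩ | ⟨y, hy⟩
        · rw [hg.hτβ i]
          exact ⟨i, eF_thru hg.hτinj i, i, Relation.ReflTransGen.refl, mF_inl i⟩
        · rw [hy]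
          exact Or.inl (eF_cup (hg.not_thru hy) hy)
    | Sum.inr x =>
        rcases hg.hbot x with ⟨i, rfl⟩ | ⟨y, hy⟩
        · rw [hg.hβτ i]
          exact ⟨i, mF_thru hg.hβinj i, i, Relation.ReflTransGen.refl, eF_inr i⟩
        · rw [hy]
          exact Or.inl (mF_cap (hg.not_bthru hy) hy)
  · intro x y h
    match x, y with
    | Sum.inl x, Sum.inl y =>
        rcases h with h | ⟨a, -, b, hSbb, -⟩
        · exact (hg.eF_inl_iff.mp h).symm
        · exact nomatch ((mF_inl a).symm.trans (hSbb : mF f β (Sum.inl a) = Sum.inl b))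
    | Sum.inl x, Sum.inr y =>
        obtain ⟨a, hRab, c, hrtg, hSbc⟩ := h
        have hac : a = c := rtg_eq_of_empty (by
          rintro u v ⟨w, hw, -⟩
          exact nomatch ((mF_inl u).symm.trans
            (hw : mF f β (Sum.inl u) = Sum.inl w))) hrtg
        have hx : x = τ a := hg.eF_inl_inr_iff.mp hRab
        have hy : y = β c := (Sum.inr.inj ((mF_inl c).symm.trans hSbc)).symm
        subst hx hac
        rw [hy, hg.hτβ a]
    | Sum.inr x, Sum.inl y =>
        obtain ⟨a, hScb, c, hrtg, hRba⟩ := h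
        have hac : a = c := rtg_eq_of_empty (by
          rintro u v ⟨w, hw, -⟩
          exact nomatch ((eF_inr u).symm.trans
            (hw : eF f τ (Sum.inr u) = Sum.inr w))) hrtg
        have hx : x = β a := hg.mF_inr_inl_iff.mp hScb
        have hy : y = τ c := (Sum.inl.inj ((eF_inr c).symm.trans hRba)).symm
        subst hx hac
        rw [hy, hg.hβτ a]
    | Sum.inr x, Sum.inr y =>
        rcases h with h | ⟨a, -, b, hRbb, -⟩
        · exact (hg.mF_inr_iff.mp h).symm
        · exact nomatch ((eF_inr a).symm.trans (hRbb : eF f τ (Sum.inr a) = Sum.inr b))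

private lemma Good.rtg_SbbRbb (hg : Good f τ β) {a c : Fin n}
    (h : Relation.ReflTransGen (stepr f) a c) :
    Relation.ReflTransGen
      (Relation.Comp (fun i j => eF f τ (Sum.inl i) = Sum.inl j)
        (fun i j => mF f β (Sum.inr i) = Sum.inr j)) a c := by
  refine Relation.ReflTransGen.mono ?_ _ _ h
  rintro u v ⟨w, hw, hwv⟩
  exact ⟨w, hg.eF_inl_iff.mpr hw, hg.mF_inr_iff.mpr hwv⟩

private lemma Good.rtg_SbbRbb' (hg : Good f τ β) {a c : Fin n}
    (h : Relation.ReflTransGen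
      (Relation.Comp (fun i j => eF f τ (Sum.inl i) = Sum.inl j)
        (fun i j => mF f β (Sum.inr i) = Sum.inr j)) a c) :
    Relation.ReflTransGen (stepr f) a c := by
  refine Relation.ReflTransGen.mono ?_ _ _ h
  rintro u v ⟨w, hw, hwv⟩
  exact ⟨w, hg.eF_inl_iff.mp hw, hg.mF_inr_iff.mp hwv⟩

private lemma Good.rtg_RbbSbb (hg : Good f τ β) {a c : Fin n}
    (h : Relation.ReflTransGen (stepr2 f) a c) :
    Relation.ReflTransGen
      (Relation.Comp (fun i j => mF f β (Sum.inr i) = Sum.inr j)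
        (fun i j => eF f τ (Sum.inl i) = Sum.inl j)) a c := by
  refine Relation.ReflTransGen.mono ?_ _ _ h
  rintro u v ⟨w, hw, hwv⟩
  exact ⟨w, hg.mF_inr_iff.mpr hw, hg.eF_inl_iff.mpr hwv⟩

private lemma Good.rtg_RbbSbb' (hg : Good f τ β) {a c : Fin n}
    (h : Relation.ReflTransGen
      (Relation.Comp (fun i j => mF f β (Sum.inr i) = Sum.inr j)
        (fun i j => eF f τ (Sum.inl i) = Sum.inl j)) a c) :
    Relation.ReflTransGen (stepr2 f) a c := by
  refine Relation.ReflTransGen.mono ?_ _ _ h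
  rintro u v ⟨w, hw, hwv⟩
  exact ⟨w, hg.mF_inr_iff.mp hw, hg.eF_inl_iff.mp hwv⟩

private lemma Good.exec_me (hg : Good f τ β) : execFun (mF f β) (eF f τ) = Sum.swap := by
  apply execFun_eq
  · intro x
    match x with
    | Sum.inl i =>
        exact ⟨β i, mF_inl i, τ i, hg.rtg_SbbRbb (hg.hA i), eF_thru hg.hτinj i⟩
    | Sum.inr i =>
        exact ⟨τ i, eF_inr i, β i, hg.rtg_RbbSbb (rtg_stepr_rev hg.hinv (hg.hA i)),
          mF_thru hg.hβinj i⟩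
  · intro x y h
    match x, y with
    | Sum.inl i, Sum.inl j =>
        exfalso
        rcases h with h | ⟨a, hRab, b, hSbb, c, hrtg, hRba⟩
        · exact nomatch ((mF_inl i).symm.trans (h : mF f β (Sum.inl i) = Sum.inl j))
        · have ha : a = β i := (Sum.inr.inj ((mF_inl i).symm.trans hRab)).symm
          subst ha
          have hcup : cupr f (β i) b := hg.eF_inl_iff.mp hSbb
          have hrtg2 : Relation.ReflTransGen (stepr2 f) b c := hg.rtg_RbbSbb' hrtg
          have hcB : c = β j := hg.mF_inr_inl_iff.mp hRba
          exact excl1 hg.hinv (β i) (τ i) (hg.hA i) ⟨β i, hg.hτβ i⟩ b hcup c hrtg2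
            ⟨τ j, by rw [hcB]; exact hg.hβτ j⟩
    | Sum.inl i, Sum.inr j =>
        obtain ⟨a, hRab, c, hrtg, hSbc⟩ := h
        have ha : a = β i := (Sum.inr.inj ((mF_inl i).symm.trans hRab)).symm
        subst ha
        have hrtg2 : Relation.ReflTransGen (stepr f) (β i) c := hg.rtg_SbbRbb' hrtg
        have hc : c = τ j := hg.eF_inl_inr_iff.mp hSbc
        subst hc
        have : τ j = τ i := rtg_eq_of_terminal stepr_det hrtg2 (hg.hA i)
          (stepr_terminal (hg.hτβ j)) (stepr_terminal (hg.hτβ i))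
        rw [hg.hτinj this]
        rfl
    | Sum.inr i, Sum.inl j =>
        obtain ⟨a, hScb, c, hrtg, hRba⟩ := h
        have ha : a = τ i := (Sum.inl.inj ((eF_inr i).symm.trans hScb)).symm
        subst ha
        have hrtg2 : Relation.ReflTransGen (stepr2 f) (τ i) c := hg.rtg_RbbSbb' hrtg
        have hc : c = β j := hg.mF_inr_inl_iff.mp hRba
        subst hc
        have : β j = β i := rtg_eq_of_terminal stepr2_det hrtg2
          (rtg_stepr_rev hg.hinv (hg.hA i))
          (stepr2_terminal (hg.hβτ j)) (stepr2_terminal (hg.hβτ i))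
        rw [hg.hβinj this]
        rfl
    | Sum.inr i, Sum.inr j =>
        exfalso
        rcases h with h | ⟨a, hScb, b, hRbb, c, hrtg, hSbc⟩
        · exact nomatch ((eF_inr i).symm.trans (h : eF f τ (Sum.inr i) = Sum.inr j))
        · have ha : a = τ i := (Sum.inl.inj ((eF_inr i).symm.trans hScb)).symm
          subst ha
          have hcap : capr f (τ i) b := hg.mF_inr_iff.mp hRbb
          have hrtg2 : Relation.ReflTransGen (stepr f) b c := hg.rtg_SbbRbb' hrtg
          have hcT : c = τ j := hg.eF_inl_inr_iff.mp hSbc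
          exact excl2 hg.hinv (τ i) (β i) (rtg_stepr_rev hg.hinv (hg.hA i))
            ⟨τ i, hg.hβτ i⟩ b hcap c hrtg2 ⟨β j, by rw [hcT]; exact hg.hτβ j⟩

private lemma Good.Z_em (hg : Good f τ β) : Z (eF f τ) (mF f β) = 0 := by
  have hempty : {S : Set (Fin k) | ∃ i, Cyclic (Cyc (eF f τ) (mF f β)) i ∧
      S = cycleOf (Cyc (eF f τ) (mF f β)) i} = ∅ := by
    ext S
    simp only [Set.mem_setOf_eq, Set.mem_empty_iff_false, iff_false]
    rintro ⟨i, ⟨k', hk', hrel⟩, -⟩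
    match k', hk' with
    | k'' + 1, _ =>
        obtain ⟨mid, ⟨c, hc, -⟩, -⟩ := hrel
        rw [eF_inr] at hc
        exact nomatch hc
  show _ = 0
  rw [Z, hempty, Set.ncard_empty]

private lemma Good.Cyc_me (hg : Good f τ β) : Cyc (mF f β) (eF f τ) = Cyc f f := by
  funext i j
  apply propext
  constructor
  · rintro ⟨c, h1, h2⟩
    exact ⟨c, hg.mF_inr_iff.mp h1, hg.eF_inl_iff.mp h2⟩
  · rintro ⟨c, h1, h2⟩
    exact ⟨c, hg.mF_inr_iff.mpr h1, hg.eF_inl_iff.mpr h2⟩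

private lemma Good.Z_me (hg : Good f τ β) : Z (mF f β) (eF f τ) = Z f f := by
  rw [Z, Z, hg.Cyc_me]

end Exec
/-- Every idempotent in the Temperley-Lieb diagram category `D` splits: if
`i : n → n` satisfies `i ∘ i = i` then there are `e : n → k` and `m : k → n`
with `i = m ∘ e` and `e ∘ m = id_k`. -/
theorem stmt_16 (n : ℕ) (I : TLHom n n) (hI : Planar I.2)
    (hidem : TLcomp I I = I) :
    ∃ (k : ℕ) (E : TLHom n k) (M : TLHom k n),
      Planar E.2 ∧ Planar M.2 ∧
      TLcomp E M = I ∧ TLcomp M E = tlid k := by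
  classical
  set f := I.2 with hf
  obtain ⟨⟨hinv, hfpf⟩, hPL1, hPL2⟩ := hI
  have h1 : I.1 + I.1 + Z f f = I.1 := congrArg Prod.fst hidem
  have h2 : execFun f f = f := congrArg Prod.snd hidem
  have hI1 : I.1 = 0 := by omega
  have hZ0 : Z f f = 0 := by omega
  set tops : Finset (Fin n) := Finset.univ.filter (fun x => (f (Sum.inl x)).isRight)
    with htops
  set bots : Finset (Fin n) := Finset.univ.filter (fun x => (f (Sum.inr x)).isLeft)
    with hbots
  have mem_tops : ∀ x, x ∈ tops ↔ ∃ y, f (Sum.inl x) = Sum.inr y := by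
    intro x
    simp [htops, Finset.mem_filter, Sum.isRight_iff]
  have mem_bots : ∀ x, x ∈ bots ↔ ∃ y, f (Sum.inr x) = Sum.inl y := by
    intro x
    simp [hbots, Finset.mem_filter, Sum.isLeft_iff]
  have hcard : bots.card = tops.card := by
    apply Finset.card_bij (fun y hy => ((mem_bots y).mp hy).choose)
    · intro y hy
      have hx := ((mem_bots y).mp hy).choose_spec
      rw [mem_tops]
      exact ⟨y, by have := hinv (Sum.inr y); rw [hx] at this; exact this⟩
    · intro y1 h1' y2 h2' heq
      have hx1 := ((mem_bots y1).mp h1').choose_spec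
      have hx2 := ((mem_bots y2).mp h2').choose_spec
      have e1 : f (Sum.inl (((mem_bots y1).mp h1').choose)) = Sum.inr y1 := by
        have := hinv (Sum.inr y1); rw [hx1] at this; exact this
      have e2 : f (Sum.inl (((mem_bots y2).mp h2').choose)) = Sum.inr y2 := by
        have := hinv (Sum.inr y2); rw [hx2] at this; exact this
      rw [heq] at e1
      rw [e1] at e2
      exact Sum.inr.inj e2
    · intro x hx
      obtain ⟨y, hy⟩ := (mem_tops x).mp hx
      have hyx : f (Sum.inr y) = Sum.inl x := by
        have := hinv (Sum.inl x); rw [hy] at this; exact this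
      have hymem : y ∈ bots := (mem_bots y).mpr ⟨x, hyx⟩
      refine ⟨y, hymem, ?_⟩
      have := ((mem_bots y).mp hymem).choose_spec
      exact Sum.inl.inj (this.symm.trans hyx)
  set τf : Fin tops.card → Fin n := fun i => tops.orderEmbOfFin rfl i with hτf
  have hτs : StrictMono τf := (tops.orderEmbOfFin rfl).strictMono
  have hβs0 : StrictMono (fun i => bots.orderEmbOfFin hcard i : Fin tops.card → Fin n) :=
    (bots.orderEmbOfFin hcard).strictMono
  have hmemτ : ∀ i, τf i ∈ tops := fun i => tops.orderEmbOfFin_mem rfl i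
  have hpair0 : ∀ i, ∃ y, f (Sum.inl (τf i)) = Sum.inr y := fun i => (mem_tops _).mp (hmemτ i)
  set βf : Fin tops.card → Fin n := fun i => (hpair0 i).choose with hβf
  have hτβ : ∀ i, f (Sum.inl (τf i)) = Sum.inr (βf i) := fun i => (hpair0 i).choose_spec
  have hβτ : ∀ i, f (Sum.inr (βf i)) = Sum.inl (τf i) := by
    intro i
    have := hinv (Sum.inl (τf i)); rw [hτβ i] at this; exact this
  have hβmono : StrictMono βf := by
    intro i j hij
    have h := hPL2 (Sum.inl (τf i)) (Sum.inl (τf j)) ?_ ?_ ?_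
    · rw [hτβ i, hτβ j] at h
      exact Sum.inr_lt_inr_iff.mp h
    · rw [hτβ i]; exact incomp_inr_inl _ _
    · exact Sum.inl_lt_inl_iff.mpr (hτs hij)
    · rw [hτβ j]; exact incomp_inl_inr _ _
  have hβeq : βf = fun i => bots.orderEmbOfFin hcard i := by
    apply Finset.orderEmbOfFin_unique hcard
    · intro i
      rw [mem_bots]
      exact ⟨τf i, hβτ i⟩
    · exact hβmono
  have htop : ∀ x, (∃ i, τf i = x) ∨ ∃ y, f (Sum.inl x) = Sum.inl y := by
    intro x
    match hfx : f (Sum.inl x) with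
    | Sum.inl y => exact Or.inr ⟨y, rfl⟩
    | Sum.inr y =>
        left
        have hx : x ∈ tops := (mem_tops x).mpr ⟨y, hfx⟩
        have : x ∈ Set.range (tops.orderEmbOfFin rfl) := by
          rw [Finset.range_orderEmbOfFin]
          exact hx
        obtain ⟨i, hi⟩ := this
        exact ⟨i, hi⟩
  have hbot : ∀ x, (∃ i, βf i = x) ∨ ∃ y, f (Sum.inr x) = Sum.inr y := by
    intro x
    match hfx : f (Sum.inr x) with
    | Sum.inr y => exact Or.inr ⟨y, rfl⟩
    | Sum.inl y =>
        left
        have hx : x ∈ bots := (mem_bots x).mpr ⟨y, hfx⟩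
        have : x ∈ Set.range (bots.orderEmbOfFin hcard) := by
          rw [Finset.range_orderEmbOfFin]
          exact hx
        obtain ⟨i, hi⟩ := this
        rw [hβeq]
        exact ⟨i, hi⟩
  have hA : ∀ i, Relation.ReflTransGen (stepr f) (βf i) (τf i) := by
    intro i
    have hval := congrFun h2 (Sum.inl (τf i))
    rw [hτβ i] at hval
    by_cases hc : ∃ y, ExecR (graphRel f) (graphRel f) (Sum.inl (τf i)) y
    · have hspec := hc.choose_spec
      have hch : hc.choose = Sum.inr (βf i) := by
        unfold execFun at hval
        rw [dif_pos hc] at hval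
        exact hval
      rw [hch] at hspec
      obtain ⟨a, hRab, c, hrtg, hSbc⟩ :=
        (hspec : Relation.Comp (fun i j => graphRel f (Sum.inl i) (Sum.inr j))
          (Relation.Comp
            (Relation.ReflTransGen (Relation.Comp
              (fun i j => graphRel f (Sum.inl i) (Sum.inl j))
              (fun i j => graphRel f (Sum.inr i) (Sum.inr j))))
            (fun i j => graphRel f (Sum.inl i) (Sum.inr j))) (τf i) (βf i))
      have ha : a = βf i := by
        have := (hτβ i).symm.trans (hRab : f (Sum.inl (τf i)) = Sum.inr a)
        exact (Sum.inr.inj this).symm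
      subst ha
      have hc' : c = τf i := by
        have h3 : f (Sum.inl c) = Sum.inr (βf i) := hSbc
        have h4 := hinv (Sum.inl c)
        rw [h3] at h4
        have := (hβτ i).symm.trans h4
        exact (Sum.inl.inj this).symm
      subst hc'
      exact hrtg
    · exfalso
      unfold execFun at hval
      rw [dif_neg hc] at hval
      exact nomatch hval
  rw [hβeq] at hA hτβ hβτ
  have hg : Good f τf (fun i => bots.orderEmbOfFin hcard i) :=
    ⟨hinv, hfpf, hPL1, hτs, hβs0, hτβ, htop, by
      intro x
      rcases hbot x with ⟨i, hi⟩ | h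
      · rw [hβeq] at hi
        exact Or.inl ⟨i, hi⟩
      · exact Or.inr h, hA⟩
  refine ⟨tops.card, ((0 : ℕ), eF f τf),
    ((0 : ℕ), mF f (fun i => bots.orderEmbOfFin hcard i)), hg.e_planar, hg.m_planar, ?_, ?_⟩
  · show (0 + 0 + Z (eF f τf) (mF f (fun i => bots.orderEmbOfFin hcard i)),
      execFun (eF f τf) (mF f (fun i => bots.orderEmbOfFin hcard i))) = I
    rw [hg.Z_em, hg.exec_em]
    have : I = (I.1, I.2) := rfl
    rw [this]
    rw [hI1, ← hf]
  · show (0 + 0 + Z (mF f (fun i => bots.orderEmbOfFin hcard i)) (eF f τf),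
      execFun (mF f (fun i => bots.orderEmbOfFin hcard i)) (eF f τf)) = tlid tops.card
    rw [hg.Z_me, hg.exec_me, hZ0]
    rfl
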